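/- (Galerkin condition for Gl-QFOM.) Let A ∈ ℍ^{n×n}, B, X₀ ∈ ℍ^{n×m}, R₀ := B − A X₀, β := ‖R₀‖ > 0, V₁ := R₀ β^{-1}, and assume the Arnoldi hypotheses through step k; extend h_{i,j} by h_{i,j} := 0 for i > j+1. Then for every y ∈ ℍ^k the following are equivalent: (a) tr(V_i^* (R₀ − A(Σ_{j=1}^k V_j y_j))) = 0 for all i = 1, …, k; (b) Σ_{j=1}^k h_{i,j} y_j = β δ_{i1} for all i = 1, …, k, i.e. H_k y = β e₁ where H_k = (h_{i,j})_{1≤i,j≤k} and e₁ = (1,0,…,0)^T ∈ ℝ^k. -/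

import Mathlib

open Matrix Quaternion

noncomputable section

/-- Entrywise right scalar multiple of a quaternion matrix. -/
def qsmul {n m : ℕ} (X : Matrix (Fin n) (Fin m) ℍ[ℝ]) (a : ℍ[ℝ]) :
    Matrix (Fin n) (Fin m) ℍ[ℝ] := fun i j => X i j * a

/-- Frobenius norm of a quaternion matrix: `‖X‖ = (Re tr(X^* X))^{1/2}`. -/
def qnorm {n m : ℕ} (X : Matrix (Fin n) (Fin m) ℍ[ℝ]) : ℝ :=
  Real.sqrt (Matrix.trace (Xᴴ * X)).re

/-- The Arnoldi hypotheses through step `k`. -/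
structure ArnoldiData (n m k : ℕ) (A : Matrix (Fin n) (Fin n) ℍ[ℝ])
    (V : ℕ → Matrix (Fin n) (Fin m) ℍ[ℝ]) (h : ℕ → ℕ → ℍ[ℝ]) : Prop where
  normV1 : qnorm (V 1) = 1
  hdef : ∀ j ∈ Finset.Icc 1 k, ∀ i ∈ Finset.Icc 1 j,
      h i j = Matrix.trace ((V i)ᴴ * (A * V j))
  hsub : ∀ j ∈ Finset.Icc 1 k,
      h (j+1) j = (qnorm (A * V j - ∑ i ∈ Finset.Icc 1 j, qsmul (V i) (h i j)) : ℍ[ℝ])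
  hsub_ne : ∀ j ∈ Finset.Icc 1 k, h (j+1) j ≠ 0
  vdef : ∀ j ∈ Finset.Icc 1 k,
      V (j+1) = qsmul (A * V j - ∑ i ∈ Finset.Icc 1 j, qsmul (V i) (h i j)) (h (j+1) j)⁻¹

/- ## Auxiliary lemmas -/

lemma qsmul_qsmul {n m : ℕ} (X : Matrix (Fin n) (Fin m) ℍ[ℝ]) (a b : ℍ[ℝ]) :
    qsmul (qsmul X a) b = qsmul X (a * b) := by
  funext i j; simp [qsmul, mul_assoc]

lemma qsmul_one {n m : ℕ} (X : Matrix (Fin n) (Fin m) ℍ[ℝ]) : qsmul X 1 = X := by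
  funext i j; simp [qsmul]

lemma mul_qsmul {n m : ℕ} (A : Matrix (Fin n) (Fin n) ℍ[ℝ])
    (X : Matrix (Fin n) (Fin m) ℍ[ℝ]) (a : ℍ[ℝ]) :
    A * qsmul X a = qsmul (A * X) a := by
  funext i j; simp [qsmul, Matrix.mul_apply, Finset.sum_mul, mul_assoc]

lemma trace_qsmul_right {n m : ℕ} (X Y : Matrix (Fin n) (Fin m) ℍ[ℝ]) (a : ℍ[ℝ]) :
    Matrix.trace (Xᴴ * qsmul Y a) = Matrix.trace (Xᴴ * Y) * a := by
  simp [Matrix.trace, Matrix.diag, Matrix.mul_apply, qsmul, Finset.sum_mul, mul_assoc]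

lemma trace_qsmul_left {n m : ℕ} (X Y : Matrix (Fin n) (Fin m) ℍ[ℝ]) (a : ℍ[ℝ]) :
    Matrix.trace ((qsmul X a)ᴴ * Y) = star a * Matrix.trace (Xᴴ * Y) := by
  simp [Matrix.trace, Matrix.diag, Matrix.mul_apply, qsmul, Finset.mul_sum, mul_assoc,
    StarMul.star_mul]

lemma trace_conj_swap {n m : ℕ} (X Y : Matrix (Fin n) (Fin m) ℍ[ℝ]) :
    Matrix.trace (Yᴴ * X) = star (Matrix.trace (Xᴴ * Y)) := by
  rw [← Matrix.trace_conjTranspose, Matrix.conjTranspose_mul,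
    Matrix.conjTranspose_conjTranspose]

lemma trace_self_eq {n m : ℕ} (X : Matrix (Fin n) (Fin m) ℍ[ℝ]) :
    Matrix.trace (Xᴴ * X) = ((qnorm X ^ 2 : ℝ) : ℍ[ℝ]) := by
  have h1 : Matrix.trace (Xᴴ * X)
      = ((∑ i, ∑ l, normSq (X l i) : ℝ) : ℍ[ℝ]) := by
    simp only [Matrix.trace, Matrix.diag, Matrix.mul_apply, Matrix.conjTranspose_apply,
      Quaternion.star_mul_self]
    rw [show ((∑ i, ∑ l, normSq (X l i) : ℝ) : ℍ[ℝ])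
        = algebraMap ℝ ℍ[ℝ] (∑ i, ∑ l, normSq (X l i)) from rfl, map_sum]
    refine Finset.sum_congr rfl fun i _ => ?_
    rw [map_sum]
    rfl
  have hnn : 0 ≤ (∑ i, ∑ l, normSq (X l i) : ℝ) :=
    Finset.sum_nonneg fun _ _ => Finset.sum_nonneg fun _ _ => normSq_nonneg
  rw [h1]
  congr 1
  rw [qnorm, h1, Quaternion.re_coe, Real.sq_sqrt hnn]

/-- Orthonormality of the Arnoldi blocks. -/
lemma arnoldi_ortho {n m k : ℕ} {A : Matrix (Fin n) (Fin n) ℍ[ℝ]}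
    {V : ℕ → Matrix (Fin n) (Fin m) ℍ[ℝ]} {h : ℕ → ℕ → ℍ[ℝ]}
    (hA : ArnoldiData n m k A V h) :
    ∀ p, p ≤ k → ∀ i ∈ Finset.Icc 1 (p+1), ∀ i' ∈ Finset.Icc 1 (p+1),
      Matrix.trace ((V i)ᴴ * V i') = if i = i' then 1 else 0 := by
  obtain ⟨hn1, hdef, hsub, hne, hvdef⟩ := hA
  intro p
  induction p with
  | zero =>
    intro _ i hi i' hi'
    simp only [Finset.mem_Icc] at hi hi'
    have hi1 : i = 1 := by omega
    have hi'1 : i' = 1 := by omega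
    subst hi1; subst hi'1
    rw [trace_self_eq, hn1]
    norm_num
  | succ p ih =>
    intro hpk i hi i' hi'
    have ihp := ih (by omega)
    set j := p + 1 with hjdef
    have hj : j ∈ Finset.Icc 1 k := by simp only [Finset.mem_Icc]; omega
    set W := A * V j - ∑ l ∈ Finset.Icc 1 j, qsmul (V l) (h l j) with hW
    -- orthogonality of W against V 1 .. V j
    have horthW : ∀ i ∈ Finset.Icc 1 j, Matrix.trace ((V i)ᴴ * W) = 0 := by
      intro i hi
      rw [hW, Matrix.mul_sub, Matrix.trace_sub, Matrix.mul_sum, Matrix.trace_sum]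
      have hterm : ∀ l ∈ Finset.Icc 1 j,
          Matrix.trace ((V i)ᴴ * qsmul (V l) (h l j))
            = if i = l then h l j else 0 := by
        intro l hl
        rw [trace_qsmul_right]
        have hmem : ∀ q ∈ Finset.Icc 1 j, q ∈ Finset.Icc 1 (p+1) := by
          intro q hq; simp only [Finset.mem_Icc] at *; omega
        rw [ihp i (hmem i hi) l (hmem l hl)]
        split <;> simp
      rw [Finset.sum_congr rfl hterm, Finset.sum_ite_eq, if_pos hi,
        ← hdef j hj i hi, sub_self]
    have hVsucc := hvdef j hj
    rw [← hW] at hVsucc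
    -- trace of V i against V (j+1), i ≤ j
    have horthV : ∀ i ∈ Finset.Icc 1 j, Matrix.trace ((V i)ᴴ * V (j+1)) = 0 := by
      intro i hi
      rw [hVsucc, trace_qsmul_right, horthW i hi, zero_mul]
    -- norm of V (j+1)
    have hnorm : Matrix.trace ((V (j+1))ᴴ * V (j+1)) = 1 := by
      have hr : h (j+1) j = ((qnorm W : ℝ) : ℍ[ℝ]) := by rw [hsub j hj, hW]
      have hrne : (qnorm W : ℝ) ≠ 0 := by
        intro h0
        exact hne j hj (by rw [hr, h0]; norm_num)
      rw [hVsucc, trace_qsmul_left, trace_qsmul_right, trace_self_eq, hr,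
        ← Quaternion.coe_inv, Quaternion.star_coe, ← Quaternion.coe_mul,
        ← Quaternion.coe_mul]
      rw [show (qnorm W)⁻¹ * (qnorm W ^ 2 * (qnorm W)⁻¹) = 1 by field_simp]
      norm_num
    -- now case analysis
    simp only [Finset.mem_Icc] at hi hi'
    by_cases hcase : i = j + 1
    · by_cases hcase' : i' = j + 1
      · subst hcase; subst hcase'; rw [hnorm, if_pos rfl]
      · have hi'j : i' ∈ Finset.Icc 1 j := by simp only [Finset.mem_Icc]; omega
        subst hcase
        rw [trace_conj_swap, horthV i' hi'j, star_zero, if_neg (by omega)]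
    · by_cases hcase' : i' = j + 1
      · have hij : i ∈ Finset.Icc 1 j := by simp only [Finset.mem_Icc]; omega
        subst hcase'
        rw [horthV i hij, if_neg (by omega)]
      · exact ihp i (by simp only [Finset.mem_Icc]; omega)
          i' (by simp only [Finset.mem_Icc]; omega)

/-- Galerkin condition for Gl-QFOM: with `R₀ = B − A X₀`, `β = ‖R₀‖ > 0`,
`V₁ = R₀ β⁻¹`, the Arnoldi hypotheses through step `k` and `h i j = 0` for `i > j+1`,
for every `y ∈ ℍ^k` the Galerkin condition
`tr(V_i^* (R₀ − A Σ_{j=1}^k V_j y_j)) = 0` (`i = 1, …, k`) is equivalent to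
`H_k y = β e₁`, i.e. `Σ_{j=1}^k h_{i,j} y_j = β δ_{i1}` for `i = 1, …, k`. -/
theorem glqfom_galerkin_condition (n m k : ℕ)
    (A : Matrix (Fin n) (Fin n) ℍ[ℝ]) (B X₀ : Matrix (Fin n) (Fin m) ℍ[ℝ])
    (R₀ : Matrix (Fin n) (Fin m) ℍ[ℝ]) (hR₀ : R₀ = B - A * X₀)
    (β : ℝ) (hβ : β = qnorm R₀) (hβpos : 0 < β)
    (V : ℕ → Matrix (Fin n) (Fin m) ℍ[ℝ]) (hV1 : V 1 = qsmul R₀ ((β : ℍ[ℝ])⁻¹))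
    (h : ℕ → ℕ → ℍ[ℝ]) (hA : ArnoldiData n m k A V h)
    (hzero : ∀ i j : ℕ, j + 1 < i → h i j = 0) :
    ∀ y : ℕ → ℍ[ℝ],
      (∀ i ∈ Finset.Icc 1 k,
        Matrix.trace ((V i)ᴴ *
          (R₀ - A * ∑ j ∈ Finset.Icc 1 k, qsmul (V j) (y j))) = 0) ↔
      (∀ i ∈ Finset.Icc 1 k,
        ∑ j ∈ Finset.Icc 1 k, h i j * y j = if i = 1 then (β : ℍ[ℝ]) else 0) := by
  intro y
  have ortho := arnoldi_ortho hA k le_rfl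
  have hβq : ((β : ℝ) : ℍ[ℝ]) ≠ 0 := by
    intro h0
    have : β = 0 := by
      have := congrArg QuaternionAlgebra.re h0
      simpa [Quaternion.re_coe] using this
    exact absurd this (ne_of_gt hβpos)
  have hR0V : R₀ = qsmul (V 1) ((β : ℝ) : ℍ[ℝ]) := by
    rw [hV1, qsmul_qsmul, inv_mul_cancel₀ hβq, qsmul_one]
  have hmemk : ∀ q ∈ Finset.Icc 1 k, q ∈ Finset.Icc 1 (k+1) := by
    intro q hq; simp only [Finset.mem_Icc] at *; omega
  -- A V j = Σ_{i=1}^{j+1} V i h i j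
  have hexp : ∀ j ∈ Finset.Icc 1 k,
      A * V j = ∑ i ∈ Finset.Icc 1 (j+1), qsmul (V i) (h i j) := by
    intro j hj
    rw [Finset.sum_Icc_succ_top (by omega : 1 ≤ j + 1)]
    have hterm : qsmul (V (j+1)) (h (j+1) j)
        = A * V j - ∑ i ∈ Finset.Icc 1 j, qsmul (V i) (h i j) := by
      rw [hA.vdef j hj, qsmul_qsmul, inv_mul_cancel₀ (hA.hsub_ne j hj), qsmul_one]
    rw [hterm]
    abel
  -- trace identity
  have htr : ∀ i ∈ Finset.Icc 1 k, ∀ j ∈ Finset.Icc 1 k,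
      Matrix.trace ((V i)ᴴ * (A * V j)) = h i j := by
    intro i hi j hj
    rw [hexp j hj, Matrix.mul_sum, Matrix.trace_sum]
    have hterm : ∀ l ∈ Finset.Icc 1 (j+1),
        Matrix.trace ((V i)ᴴ * qsmul (V l) (h l j)) = if i = l then h l j else 0 := by
      intro l hl
      have hlk : l ∈ Finset.Icc 1 (k+1) := by
        simp only [Finset.mem_Icc] at *; omega
      rw [trace_qsmul_right, ortho i (hmemk i hi) l hlk]
      split <;> simp
    rw [Finset.sum_congr rfl hterm, Finset.sum_ite_eq]
    by_cases hmem : i ∈ Finset.Icc 1 (j+1)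
    · rw [if_pos hmem]
    · rw [if_neg hmem]
      simp only [Finset.mem_Icc] at hi hmem
      exact (hzero i j (by omega)).symm
  -- trace against R₀
  have htrR : ∀ i ∈ Finset.Icc 1 k,
      Matrix.trace ((V i)ᴴ * R₀) = if i = 1 then ((β : ℝ) : ℍ[ℝ]) else 0 := by
    intro i hi
    have h1k : (1 : ℕ) ∈ Finset.Icc 1 (k+1) := by
      simp only [Finset.mem_Icc]; omega
    rw [hR0V, trace_qsmul_right, ortho i (hmemk i hi) 1 h1k]
    split <;> simp
  -- main rewriting of the residual trace
  have hmain : ∀ i ∈ Finset.Icc 1 k,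
      Matrix.trace ((V i)ᴴ *
          (R₀ - A * ∑ j ∈ Finset.Icc 1 k, qsmul (V j) (y j)))
        = (if i = 1 then ((β : ℝ) : ℍ[ℝ]) else 0)
          - ∑ j ∈ Finset.Icc 1 k, h i j * y j := by
    intro i hi
    rw [Matrix.mul_sub, Matrix.trace_sub, htrR i hi]
    congr 1
    rw [Matrix.mul_sum, Matrix.mul_sum, Matrix.trace_sum]
    refine Finset.sum_congr rfl fun j hj => ?_
    rw [mul_qsmul, trace_qsmul_right, htr i hi j hj]
  constructor
  · intro H i hi
    have := H i hi
    rw [hmain i hi] at this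
    exact (sub_eq_zero.mp this).symm
  · intro H i hi
    rw [hmain i hi, H i hi, sub_self]
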